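/- In the set-function formulation with standard weights, efficiency holds: Σ_{i ∈ Fin d} φ_v(i) = v(univ) − v(∅). -/

import Mathlib

open Finset

/-- Shapley value of player `i` for a set function `v` on coalitions in `Fin d`,
with the standard weights `|S|! (d − |S| − 1)! / d!`. -/
noncomputable def shapley {d : ℕ} (v : Finset (Fin d) → ℝ) (i : Fin d) : ℝ :=
  ∑ S ∈ (Finset.univ.erase i).powerset,
    ((S.card.factorial * (d - S.card - 1).factorial : ℕ) : ℝ) / (d.factorial : ℝ) *
      (v (insert i S) - v S)

/-- Efficiency: the total Shapley payoff equals the grand-coalition worth minus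
the empty-coalition worth. -/
theorem shapley_efficiency {d : ℕ} (hd : 1 ≤ d) (v : Finset (Fin d) → ℝ) :
    ∑ i : Fin d, shapley v i = v Finset.univ - v ∅ := by
  classical
  set w : ℕ → ℝ := fun s =>
    ((s.factorial * (d - s - 1).factorial : ℕ) : ℝ) / (d.factorial : ℝ) with hw
  have hd0 : (d.factorial : ℝ) ≠ 0 := by positivity
  -- coefficient lemma
  have hc : ∀ t : ℕ, t ≤ d →
      (t : ℝ) * w (t - 1) - ((d - t : ℕ) : ℝ) * w t
        = (if t = d then 1 else 0) - (if t = 0 then 1 else 0) := by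
    intro t ht
    rcases Nat.eq_zero_or_pos t with rfl | htpos
    · have hnd : ¬ (0 : ℕ) = d := by omega
      rw [if_neg hnd, if_pos rfl]
      have hfac : (d : ℝ) * ((d - 1).factorial : ℝ) = (d.factorial : ℝ) := by
        rw [← Nat.cast_mul, Nat.mul_factorial_pred (by omega)]
      have hw0 : w 0 = ((d - 1).factorial : ℝ) / (d.factorial : ℝ) := by
        simp only [hw, Nat.sub_zero, Nat.factorial_zero, one_mul]
      rw [hw0, Nat.sub_zero]
      field_simp
      push_cast
      linarith [hfac]
    rcases eq_or_lt_of_le ht with heq | htd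
    · rw [if_pos heq, if_neg (by omega : ¬ t = 0)]
      have h1 : d - t = 0 := by omega
      have h2 : d - (t - 1) - 1 = 0 := by omega
      have hfac : (t : ℝ) * ((t - 1).factorial : ℝ) = (d.factorial : ℝ) := by
        rw [← Nat.cast_mul, Nat.mul_factorial_pred (by omega), heq]
      have hwt1 : w (t - 1) = ((t - 1).factorial : ℝ) / (d.factorial : ℝ) := by
        simp only [hw, h2, Nat.factorial_zero, mul_one]
      rw [hwt1, h1]
      push_cast
      field_simp
      linarith [hfac]
    · rw [if_neg (by omega : ¬ t = d), if_neg (by omega : ¬ t = 0)]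
      have h2 : d - (t - 1) - 1 = d - t := by omega
      have hfac1 : (t : ℝ) * ((t - 1).factorial : ℝ) = (t.factorial : ℝ) := by
        rw [← Nat.cast_mul, Nat.mul_factorial_pred (by omega)]
      have hfac2 : ((d - t : ℕ) : ℝ) * ((d - t - 1).factorial : ℝ)
          = ((d - t).factorial : ℝ) := by
        rw [← Nat.cast_mul, Nat.mul_factorial_pred (by omega)]
      have hwt1 : w (t - 1)
          = ((t - 1).factorial : ℝ) * ((d - t).factorial : ℝ) / (d.factorial : ℝ) := by
        simp only [hw, h2, Nat.cast_mul]
      have hwt : w t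
          = (t.factorial : ℝ) * ((d - t - 1).factorial : ℝ) / (d.factorial : ℝ) := by
        simp only [hw, Nat.cast_mul]
      rw [hwt1, hwt]
      linear_combination (((d - t).factorial : ℝ) / d.factorial) * hfac1
        - ((t.factorial : ℝ) / d.factorial) * hfac2
  -- split each shapley value
  have hsplit : ∀ i : Fin d, shapley v i
      = (∑ S ∈ (Finset.univ.erase i).powerset, w S.card * v (insert i S))
        - ∑ S ∈ (Finset.univ.erase i).powerset, w S.card * v S := by
    intro i
    rw [← Finset.sum_sub_distrib]
    refine Finset.sum_congr rfl fun S _ => ?_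
    ring
  -- reindex the positive part per player
  have hA : ∀ i : Fin d,
      (∑ S ∈ (Finset.univ.erase i).powerset, w S.card * v (insert i S))
        = ∑ T ∈ (Finset.univ : Finset (Fin d)).powerset.filter (fun T => i ∈ T),
            w (T.card - 1) * v T := by
    intro i
    refine Finset.sum_nbij' (fun S => insert i S) (fun T => T.erase i) ?_ ?_ ?_ ?_ ?_
    · intro S hS
      simp only [Finset.mem_powerset, Finset.mem_filter] at hS ⊢
      exact ⟨Finset.subset_univ _, Finset.mem_insert_self i S⟩
    · intro T hT
      simp only [Finset.mem_powerset, Finset.mem_filter] at hT ⊢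
      exact Finset.erase_subset_erase i (Finset.subset_univ T)
    · intro S hS
      simp only [Finset.mem_powerset] at hS
      have hiS : i ∉ S := fun h => (Finset.mem_erase.mp (hS h)).1 rfl
      show (insert i S).erase i = S
      exact Finset.erase_insert hiS
    · intro T hT
      simp only [Finset.mem_powerset, Finset.mem_filter] at hT
      show insert i (T.erase i) = T
      exact Finset.insert_erase hT.2
    · intro S hS
      simp only [Finset.mem_powerset] at hS
      have hiS : i ∉ S := fun h => (Finset.mem_erase.mp (hS h)).1 rfl
      show w S.card * v (insert i S) = w ((insert i S).card - 1) * v (insert i S)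
      rw [Finset.card_insert_of_notMem hiS, Nat.add_sub_cancel]
  -- sum the positive parts
  have hApos : (∑ i : Fin d, ∑ S ∈ (Finset.univ.erase i).powerset,
        w S.card * v (insert i S))
      = ∑ T ∈ (Finset.univ : Finset (Fin d)).powerset,
          (T.card : ℝ) * (w (T.card - 1) * v T) := by
    rw [Finset.sum_congr rfl fun i _ => hA i]
    rw [Finset.sum_comm' (s' := fun T => Finset.univ.filter (fun i => i ∈ T))
      (t' := (Finset.univ : Finset (Fin d)).powerset)
      (by intro i T; simp only [Finset.mem_univ, true_and, Finset.mem_powerset,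
            Finset.mem_filter]; tauto)]
    refine Finset.sum_congr rfl fun T _ => ?_
    rw [Finset.sum_const, nsmul_eq_mul]
    congr 1
    have : Finset.univ.filter (fun i => i ∈ T) = T := by ext x; simp
    rw [this]
  -- sum the negative parts
  have hBneg : (∑ i : Fin d, ∑ S ∈ (Finset.univ.erase i).powerset,
        w S.card * v S)
      = ∑ T ∈ (Finset.univ : Finset (Fin d)).powerset,
          ((d - T.card : ℕ) : ℝ) * (w T.card * v T) := by
    rw [Finset.sum_comm' (s' := fun T => Finset.univ.filter (fun i => i ∉ T))
      (t' := (Finset.univ : Finset (Fin d)).powerset)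
      (by intro i T; simp only [Finset.mem_univ, true_and, Finset.mem_powerset,
            Finset.mem_filter, Finset.subset_erase]; tauto)]
    refine Finset.sum_congr rfl fun T _ => ?_
    rw [Finset.sum_const, nsmul_eq_mul]
    congr 2
    have : Finset.univ.filter (fun i => i ∉ T) = Tᶜ := by ext x; simp
    rw [this, Finset.card_compl, Fintype.card_fin]
  -- put everything together
  rw [Finset.sum_congr rfl fun i _ => hsplit i, Finset.sum_sub_distrib, hApos, hBneg,
    ← Finset.sum_sub_distrib]
  have hune : (Finset.univ : Finset (Fin d)) ≠ (∅ : Finset (Fin d)) := by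
    intro h
    have hcard : (Finset.univ : Finset (Fin d)).card = 0 := by rw [h]; rfl
    rw [Finset.card_univ, Fintype.card_fin] at hcard
    omega
  have hterm : ∀ T ∈ (Finset.univ : Finset (Fin d)).powerset,
      (T.card : ℝ) * (w (T.card - 1) * v T) - ((d - T.card : ℕ) : ℝ) * (w T.card * v T)
        = (if T = Finset.univ then v Finset.univ else 0)
          - (if T = (∅ : Finset (Fin d)) then v ∅ else 0) := by
    intro T hT
    have hTle : T.card ≤ d := by
      simpa using Finset.card_le_card (Finset.mem_powerset.mp hT)
    have hcT := hc T.card hTle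
    have hrw : (T.card : ℝ) * (w (T.card - 1) * v T)
        - ((d - T.card : ℕ) : ℝ) * (w T.card * v T)
        = ((T.card : ℝ) * w (T.card - 1) - ((d - T.card : ℕ) : ℝ) * w T.card) * v T := by
      ring
    rw [hrw, hcT]
    have h1 : (T.card = d) ↔ T = Finset.univ := by
      simpa using Finset.card_eq_iff_eq_univ T
    have h2 : (T.card = 0) ↔ T = (∅ : Finset (Fin d)) := Finset.card_eq_zero
    by_cases hu : T = Finset.univ
    · have hne : ¬ T = (∅ : Finset (Fin d)) := by rw [hu]; exact hune
      rw [if_pos (h1.mpr hu), if_neg (fun h => hne (h2.mp h)), if_pos hu, if_neg hne]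
      rw [hu]; ring
    · by_cases he : T = (∅ : Finset (Fin d))
      · rw [if_neg (fun h => hu (h1.mp h)), if_pos (h2.mpr he), if_neg hu, if_pos he]
        rw [he]; ring
      · rw [if_neg (fun h => hu (h1.mp h)), if_neg (fun h => he (h2.mp h)),
          if_neg hu, if_neg he]
        ring
  rw [Finset.sum_congr rfl hterm, Finset.sum_sub_distrib]
  rw [Finset.sum_ite_eq' _ Finset.univ (fun _ => v Finset.univ),
    Finset.sum_ite_eq' _ (∅ : Finset (Fin d)) (fun _ => v ∅)]
  simp
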